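/- There is an injective monoid morphism from the direct product {a,b}* × {c,d}* of two free monoids of rank 2 into the monoid of queue actions Q over a two-letter alphabet A = {a,b}, sending (a,ε) ↦ [a], (b,ε) ↦ [ab], (ε,c) ↦ [b̄], (ε,d) ↦ [ā b̄ b̄]. -/

import Mathlib

/-- A basic queue action: write a letter or read a letter. -/
inductive Act (A : Type) : Type
  | wr (a : A)
  | rd (a : A)
deriving DecidableEq

variable {A : Type} [DecidableEq A]

/-- The action of words over `Act A` on queue states `A* ∪ {⊥}` (⊥ = `none`). -/
def act : Option (List A) → List (Act A) → Option (List A)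
  | q, [] => q
  | none, _ :: _ => none
  | some q, (Act.wr a) :: u => act (some (q ++ [a])) u
  | some q, (Act.rd a) :: u =>
    match q with
    | [] => none
    | b :: q' => if b = a then act (some q') u else none

/-- Two words over `Act A` are equivalent if they act identically on all queues. -/
def qequiv (u v : List (Act A)) : Prop := ∀ q : List A, act (some q) u = act (some q) v

/-- Writing the word `w`. -/
def W (w : List A) : List (Act A) := w.map Act.wr

/-- Reading the word `w` (the barred copy of `w`). -/
def R (w : List A) : List (Act A) := w.map Act.rd

/-- `shuffle s` is the word `s₁ s̄₁ s₂ s̄₂ … sₖ s̄ₖ`. -/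
def shuffle (s : List A) : List (Act A) := s.flatMap fun a => [Act.wr a, Act.rd a]

/-- The projection to write letters. -/
def prW (w : List (Act A)) : List A :=
  w.filterMap fun x => match x with | Act.wr a => some a | Act.rd _ => none

/-- The projection to read letters (with the bars removed). -/
def prR (w : List (Act A)) : List A :=
  w.filterMap fun x => match x with | Act.wr _ => none | Act.rd a => some a

theorem act_append (u v : List (Act A)) : ∀ q, act q (u ++ v) = act (act q u) v := by
  induction u with
  | nil =>
      intro q
      cases q <;> rfl
  | cons x u ih =>
      intro q
      cases q with
      | none =>
          simp only [List.cons_append, act]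
          cases v with
          | nil => rfl
          | cons _ _ => rfl
      | some q =>
          cases x with
          | wr a => simpa [act] using ih _
          | rd a =>
              cases q with
              | nil =>
                  simp only [List.cons_append, act]
                  cases v with
                  | nil => rfl
                  | cons _ _ => rfl
              | cons b q' =>
                  by_cases h : b = a
                  · simp [List.cons_append, act, h, ih]
                  · simp only [List.cons_append, act, if_neg h]
                    cases v with
                    | nil => rfl
                    | cons _ _ => rfl

/-- The setoid of queue-action equivalence. -/
def qsetoid (A : Type) [DecidableEq A] : Setoid (List (Act A)) :=
  ⟨qequiv, ⟨fun _ _ => rfl, fun h q => (h q).symm, fun h1 h2 q => (h1 q).trans (h2 q)⟩⟩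

/-- The monoid of queue actions. -/
def QAct (A : Type) [DecidableEq A] : Type := Quotient (qsetoid A)

theorem act_none : ∀ v : List (Act A), act (none : Option (List A)) v = none
  | [] => rfl
  | _ :: _ => rfl

theorem qequiv_append {u u' v v' : List (Act A)} (hu : qequiv u u') (hv : qequiv v v') :
    qequiv (u ++ v) (u' ++ v') := by
  intro q
  rw [act_append, act_append, hu q]
  cases h : act (some q) u' with
  | none => rw [act_none, act_none]
  | some q' => exact hv q'

instance : Monoid (QAct A) where
  mul := Quotient.map₂ (· ++ ·) (fun _ _ hu _ _ hv => qequiv_append hu hv)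
  one := Quotient.mk (qsetoid A) []
  mul_assoc := by
    rintro ⟨u⟩ ⟨v⟩ ⟨w⟩
    exact congrArg (Quotient.mk (qsetoid A)) (List.append_assoc u v w)
  one_mul := by
    rintro ⟨u⟩
    rfl
  mul_one := by
    rintro ⟨u⟩
    exact congrArg (Quotient.mk (qsetoid A)) (List.append_nil u)

/-- The class of a word in the monoid of queue actions. -/
def cls (w : List (Act A)) : QAct A := Quotient.mk (qsetoid A) w

theorem cls_mul (u v : List (Act A)) : cls u * cls v = cls (u ++ v) := rfl

/-! ### Auxiliary development -/

theorem act_W (s p : List A) : act (some s) (W p) = some (s ++ p) := by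
  induction p generalizing s with
  | nil => simp [W, act]
  | cons a p ih => simp [W, act] at ih ⊢; rw [ih]; simp

theorem act_R (s q : List A) :
    act (some s) (R q) = if q <+: s then some (s.drop q.length) else none := by
  induction q generalizing s with
  | nil => simp [R, act]
  | cons a q ih =>
      cases s with
      | nil =>
          rw [if_neg (fun h => absurd h.length_le (by simp))]
          rfl
      | cons b s =>
          have step : act (some (b :: s)) (R (a :: q)) =
              if b = a then act (some s) (R q) else none := rfl
          rw [step]
          by_cases hb : b = a
          · subst hb
            rw [if_pos rfl, ih]
            by_cases hq : q <+: s
            · rw [if_pos hq, if_pos (List.cons_prefix_cons.mpr ⟨rfl, hq⟩)]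
              simp
            · rw [if_neg hq, if_neg (fun h => hq (List.cons_prefix_cons.mp h).2)]
          · rw [if_neg hb, if_neg (fun h => hb (List.cons_prefix_cons.mp h).1.symm)]

theorem act_WR (s p q : List A) :
    act (some s) (W p ++ R q) =
      if q <+: s ++ p then some ((s ++ p).drop q.length) else none := by
  rw [act_append, act_W, act_R]

theorem act_RW (s p q : List A) :
    act (some s) (R q ++ W p) =
      if q <+: s then some (s.drop q.length ++ p) else none := by
  rw [act_append, act_R]
  by_cases hq : q <+: s
  · rw [if_pos hq, if_pos hq, act_W]
  · rw [if_neg hq, if_neg hq, act_none]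

theorem comm_WR (p q : List A)
    (h : ∀ s : List A, s.length < q.length → ¬ q <+: s ++ p) :
    qequiv (W p ++ R q) (R q ++ W p) := by
  intro s
  rw [act_WR, act_RW]
  by_cases hq : q <+: s
  · rw [if_pos (hq.trans (s.prefix_append p)), if_pos hq,
      List.drop_append_of_le_length hq.length_le]
  · rw [if_neg hq, if_neg]
    intro hc
    rcases lt_or_ge s.length q.length with hl | hl
    · exact h s hl hc
    · exact hq (List.prefix_of_prefix_length_le hc (s.prefix_append p) hl)

/-- code for the first free monoid: `a = false ↦ [a]`, `b = true ↦ [a,b]`. -/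
def cA (b : Bool) : List Bool := if b then [false, true] else [false]

/-- code for the second free monoid: `c = false ↦ [b]`, `d = true ↦ [a,b,b]`. -/
def cC (b : Bool) : List Bool := if b then [false, true, true] else [true]

def phi (u : List Bool) : List Bool := u.flatMap cA

def psi (v : List Bool) : List Bool := v.flatMap cC

theorem W_append (x y : List A) : W (x ++ y) = W x ++ W y := List.map_append
theorem R_append (x y : List A) : R (x ++ y) = R x ++ R y := List.map_append

theorem cls_sound {u v : List (Act A)} (h : qequiv u v) : cls u = cls v :=
  Quotient.sound h

theorem gen_comm (b x : Bool) :
    cls (R (cC x)) * cls (W (cA b)) = cls (W (cA b)) * cls (R (cC x)) := by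
  rw [cls_mul, cls_mul]
  refine (cls_sound (comm_WR _ _ ?_)).symm
  intro s hs
  cases b <;> cases x <;>
    rcases s with _ | ⟨a, _ | ⟨c, _ | ⟨d, s⟩⟩⟩ <;>
      first
        | (simp [cC] at hs; done)
        | (exfalso; simp only [cC, List.length_cons, if_true, if_false,
            Bool.false_eq_true, List.length_nil] at hs; omega)
        | decide
        | (cases a <;> decide)
        | (cases a <;> cases c <;> decide)
        | (cases a <;> cases c <;> cases d <;> decide)

theorem comm_phi_cC (x : Bool) (u : List Bool) :
    cls (R (cC x)) * cls (W (phi u)) = cls (W (phi u)) * cls (R (cC x)) := by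
  induction u with
  | nil =>
      rw [show cls (W (phi ([] : List Bool))) = 1 from rfl, mul_one, one_mul]
  | cons b u ih =>
      have : phi (b :: u) = cA b ++ phi u := rfl
      rw [this, W_append, ← cls_mul, ← mul_assoc, gen_comm, mul_assoc, ih, ← mul_assoc]

theorem comm_phi_psi (u v : List Bool) :
    cls (R (psi v)) * cls (W (phi u)) = cls (W (phi u)) * cls (R (psi v)) := by
  induction v with
  | nil =>
      show (1 : QAct Bool) * _ = _ * 1
      rw [one_mul, mul_one]
  | cons x v ih =>
      have : psi (x :: v) = cC x ++ psi v := rfl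
      rw [this, R_append, ← cls_mul, mul_assoc, ih, ← mul_assoc, comm_phi_cC, mul_assoc]

theorem phi_ne_true (u : List Bool) (t : List Bool) : phi u ≠ true :: t := by
  cases u with
  | nil => simp [phi]
  | cons b u => cases b <;> simp [phi, cA]

theorem phi_inj : ∀ u v : List Bool, phi u = phi v → u = v := by
  intro u
  induction u with
  | nil =>
      intro v h
      cases v with
      | nil => rfl
      | cons b v => cases b <;> simp [phi, cA] at h
  | cons b u ih =>
      intro v h
      cases v with
      | nil => cases b <;> simp [phi, cA] at h
      | cons c v =>
          cases b <;> cases c <;> simp [phi, cA] at h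
          · rw [ih v h]
          · exact absurd h (phi_ne_true u _)
          · exact absurd h.symm (phi_ne_true v _)
          · rw [ih v h]

theorem psi_inj : ∀ u v : List Bool, psi u = psi v → u = v := by
  intro u
  induction u with
  | nil =>
      intro v h
      cases v with
      | nil => rfl
      | cons b v => cases b <;> simp [psi, cC] at h
  | cons b u ih =>
      intro v h
      cases v with
      | nil => cases b <;> simp [psi, cC] at h
      | cons c v =>
          cases b <;> cases c <;> simp [psi, cC] at h
          · rw [ih v h]
          · rw [ih v h]

theorem inj_aux {p q p' q' : List Bool}
    (h : qequiv (W p ++ R q) (W p' ++ R q')) (hle : q'.length ≤ q.length) :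
    p = p' ∧ q = q' := by
  have h1 := h q
  rw [act_WR, act_WR, if_pos (List.prefix_append q p)] at h1
  by_cases hq' : q' <+: q ++ p'
  · rw [if_pos hq'] at h1
    have hq'q : q' <+: q := List.prefix_of_prefix_length_le hq' (List.prefix_append q p') hle
    obtain ⟨r, hr⟩ := hq'q
    subst hr
    rw [List.drop_left] at h1
    rw [List.append_assoc, List.drop_left] at h1
    have hp : p = r ++ p' := Option.some.inj h1
    cases r with
    | nil => exact ⟨by simpa using hp, by simp⟩
    | cons h0 r' =>
        exfalso
        have h2 := h (q' ++ [!h0])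
        rw [act_WR, act_WR,
          if_pos ((List.prefix_append q' [!h0]).trans (List.prefix_append _ p'))] at h2
        rw [if_neg ?hneg] at h2
        · exact nomatch h2
        case hneg =>
          rw [List.append_assoc, List.prefix_append_right_inj]
          simp only [List.singleton_append, List.cons_prefix_cons]
          rintro ⟨hx, -⟩
          cases h0 <;> simp at hx
  · rw [if_neg hq'] at h1
    exact nomatch h1


/-- With `A = {a, b}` (here `a = false`, `b = true`), the direct product of two free
monoids of rank 2 embeds into the monoid of queue actions, via
`(a,ε) ↦ [a]`, `(b,ε) ↦ [ab]`, `(ε,c) ↦ [b̄]`, `(ε,d) ↦ [ā b̄ b̄]`. -/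

theorem stmt17 :
    ∃ f : FreeMonoid Bool × FreeMonoid Bool →* QAct Bool,
      Function.Injective f ∧
      f (FreeMonoid.of false, 1) = cls [Act.wr false] ∧
      f (FreeMonoid.of true, 1) = cls (W [false, true]) ∧
      f (1, FreeMonoid.of false) = cls [Act.rd true] ∧
      f (1, FreeMonoid.of true) = cls (R [false, true, true]) := by
  refine ⟨{ toFun := fun x => cls (W (phi (FreeMonoid.toList x.1)) ++ R (psi (FreeMonoid.toList x.2))),
            map_one' := ?_, map_mul' := ?_ }, ?_, ?_, ?_, ?_, ?_⟩
  · rfl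
  · rintro ⟨u, v⟩ ⟨u', v'⟩
    show cls (W (phi (FreeMonoid.toList (u * u'))) ++ R (psi (FreeMonoid.toList (v * v')))) =
      cls (W (phi (FreeMonoid.toList u)) ++ R (psi (FreeMonoid.toList v))) *
        cls (W (phi (FreeMonoid.toList u')) ++ R (psi (FreeMonoid.toList v')))
    rw [FreeMonoid.toList_mul, FreeMonoid.toList_mul]
    have hphi : phi (FreeMonoid.toList u ++ FreeMonoid.toList u')
        = phi (FreeMonoid.toList u) ++ phi (FreeMonoid.toList u') :=
      List.flatMap_append
    have hpsi : psi (FreeMonoid.toList v ++ FreeMonoid.toList v')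
        = psi (FreeMonoid.toList v) ++ psi (FreeMonoid.toList v') :=
      List.flatMap_append
    rw [hphi, hpsi, W_append, R_append, ← cls_mul, ← cls_mul, ← cls_mul, ← cls_mul, ← cls_mul]
    exact Commute.mul_mul_mul_comm ((comm_phi_psi u' v).symm) _ _
  · rintro ⟨u, v⟩ ⟨u', v'⟩ hxy
    simp only [MonoidHom.coe_mk, OneHom.coe_mk] at hxy
    have hq : qequiv (W (phi (FreeMonoid.toList u)) ++ R (psi (FreeMonoid.toList v)))
        (W (phi (FreeMonoid.toList u')) ++ R (psi (FreeMonoid.toList v'))) :=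
      Quotient.exact hxy
    have key : phi (FreeMonoid.toList u) = phi (FreeMonoid.toList u') ∧
        psi (FreeMonoid.toList v) = psi (FreeMonoid.toList v') := by
      rcases le_total (psi (FreeMonoid.toList v')).length (psi (FreeMonoid.toList v)).length
        with hle | hle
      · exact inj_aux hq hle
      · obtain ⟨h1, h2⟩ := inj_aux (fun s => (hq s).symm) hle
        exact ⟨h1.symm, h2.symm⟩
    have hu := FreeMonoid.toList.injective (phi_inj _ _ key.1)
    have hv := FreeMonoid.toList.injective (psi_inj _ _ key.2)
    exact Prod.ext hu hv
  · rfl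
  · rfl
  · rfl
  · rfl
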